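/- Let E_1, ..., E_m be ideals of S = K[x_1,...,x_n] with a fixed monomial order such that in(E_i + E_j) = in(E_i) + in(E_j) for all 1 ≤ i, j ≤ m. Then for any subset X ⊆ {1,...,m}, setting E_X = Σ_{i∈X} E_i and E_{X^c} = Σ_{j∉X} E_j, one has in(E_X + E_{X^c}) = in(E_X) + in(E_{X^c}). -/

import Mathlib

open MvPolynomial

variable {K : Type*} [Field K] {n : ℕ}

/-- The leading monomial (exponent vector) of a polynomial with respect to a monomial
order `m`: the maximum of the support; by convention `lm m 0 = 0`. -/
noncomputable def lm (m : MonomialOrder (Fin n)) (f : MvPolynomial (Fin n) K) :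
    Fin n →₀ ℕ :=
  m.toSyn.symm (f.support.sup fun d => m.toSyn d)

/-- The initial ideal of `I`: the ideal generated by the leading monomials of the
nonzero elements of `I`. -/
noncomputable def initialIdeal (m : MonomialOrder (Fin n))
    (I : Ideal (MvPolynomial (Fin n) K)) : Ideal (MvPolynomial (Fin n) K) :=
  Ideal.span {p | ∃ f ∈ I, f ≠ 0 ∧ p = monomial (lm m f) (1 : K)}

/-- `G` is a Gröbner basis of `I`: a finite set of nonzero polynomials generating `I`
whose leading monomials generate the initial ideal of `I`. -/
def IsGroebnerBasis (m : MonomialOrder (Fin n)) (I : Ideal (MvPolynomial (Fin n) K))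
    (G : Set (MvPolynomial (Fin n) K)) : Prop :=
  G.Finite ∧ (0 : MvPolynomial (Fin n) K) ∉ G ∧ Ideal.span G = I ∧
    Ideal.span ((fun g => monomial (lm m g) (1 : K)) '' G) = initialIdeal m I

/-- The S-polynomial `S(f,g)` with respect to the monomial order `m`. -/
noncomputable def sPoly (m : MonomialOrder (Fin n)) (f g : MvPolynomial (Fin n) K) :
    MvPolynomial (Fin n) K :=
  monomial (lm m f ⊔ lm m g - lm m f) (f.coeff (lm m f))⁻¹ * f -
    monomial (lm m f ⊔ lm m g - lm m g) (g.coeff (lm m g))⁻¹ * g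

/-- An ideal is a monomial ideal if it is generated by monomials. -/
def IsMonomialIdeal (I : Ideal (MvPolynomial (Fin n) K)) : Prop :=
  ∃ M : Set (Fin n →₀ ℕ), I = Ideal.span ((fun μ => (monomial μ (1 : K))) '' M)

namespace Aux

variable (mo : MonomialOrder (Fin n))

lemma toSyn_lm (f : MvPolynomial (Fin n) K) :
    mo.toSyn (lm mo f) = f.support.sup fun d => mo.toSyn d :=
  mo.toSyn.apply_symm_apply _

lemma lm_zero : lm mo (0 : MvPolynomial (Fin n) K) = 0 := by
  simp [lm]

lemma toSyn_lm_zero : mo.toSyn (lm mo (0 : MvPolynomial (Fin n) K)) = 0 := by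
  rw [lm_zero]; exact map_zero _

lemma lm_mem_support {f : MvPolynomial (Fin n) K} (hf : f ≠ 0) :
    lm mo f ∈ f.support := by
  obtain ⟨d, hd, hsup⟩ := Finset.exists_mem_eq_sup f.support
    (support_nonempty.mpr hf) (fun d => mo.toSyn d)
  have : lm mo f = d := by rw [lm, hsup, AddEquiv.symm_apply_apply]
  rwa [this]

lemma coeff_lm_ne_zero {f : MvPolynomial (Fin n) K} (hf : f ≠ 0) :
    f.coeff (lm mo f) ≠ 0 :=
  mem_support_iff.mp (lm_mem_support mo hf)

lemma le_toSyn_lm {f : MvPolynomial (Fin n) K} {d : Fin n →₀ ℕ} (hd : d ∈ f.support) :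
    mo.toSyn d ≤ mo.toSyn (lm mo f) := by
  rw [toSyn_lm]; exact Finset.le_sup hd

lemma coeff_eq_zero_of_lm_lt {f : MvPolynomial (Fin n) K} {d : Fin n →₀ ℕ}
    (h : mo.toSyn (lm mo f) < mo.toSyn d) : f.coeff d = 0 := by
  by_contra hc
  exact absurd (le_toSyn_lm mo (mem_support_iff.mpr hc)) (not_le.mpr h)

lemma toSyn_lm_le_of_support {f : MvPolynomial (Fin n) K} {s : mo.syn}
    (h : ∀ d ∈ f.support, mo.toSyn d ≤ s) : mo.toSyn (lm mo f) ≤ s := by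
  rcases eq_or_ne f 0 with rfl | hf
  · rw [toSyn_lm_zero]; exact bot_le
  · exact h _ (lm_mem_support mo hf)

lemma toSyn_lm_add_le (f g : MvPolynomial (Fin n) K) :
    mo.toSyn (lm mo (f + g)) ≤ max (mo.toSyn (lm mo f)) (mo.toSyn (lm mo g)) := by
  apply toSyn_lm_le_of_support
  intro d hd
  rcases Finset.mem_union.mp (support_add hd) with hd | hd
  · exact le_max_of_le_left (le_toSyn_lm mo hd)
  · exact le_max_of_le_right (le_toSyn_lm mo hd)


lemma monomial_lm_mem {I : Ideal (MvPolynomial (Fin n) K)} {f : MvPolynomial (Fin n) K}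
    (hf : f ∈ I) (h0 : f ≠ 0) : monomial (lm mo f) (1 : K) ∈ initialIdeal mo I :=
  Ideal.subset_span ⟨f, hf, h0, rfl⟩

lemma initialIdeal_mono {I J : Ideal (MvPolynomial (Fin n) K)} (h : I ≤ J) :
    initialIdeal mo I ≤ initialIdeal mo J := by
  apply Ideal.span_mono
  rintro p ⟨f, hf, h0, rfl⟩
  exact ⟨f, h hf, h0, rfl⟩

lemma initialIdeal_eq_span (I : Ideal (MvPolynomial (Fin n) K)) :
    initialIdeal mo I =
      Ideal.span ((fun μ => monomial μ (1 : K)) '' {μ | ∃ f ∈ I, f ≠ 0 ∧ lm mo f = μ}) := by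
  unfold initialIdeal
  congr 1
  ext p
  constructor
  · rintro ⟨f, hf, h0, rfl⟩
    exact ⟨lm mo f, ⟨f, hf, h0, rfl⟩, rfl⟩
  · rintro ⟨μ, ⟨f, hf, h0, rfl⟩, rfl⟩
    exact ⟨f, hf, h0, rfl⟩

lemma exists_divisor {A B : Ideal (MvPolynomial (Fin n) K)} {γ : Fin n →₀ ℕ}
    (hmem : monomial γ (1 : K) ∈ initialIdeal mo A + initialIdeal mo B) :
    ∃ f, (f ∈ A ∨ f ∈ B) ∧ f ≠ 0 ∧ lm mo f ≤ γ := by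
  rw [initialIdeal_eq_span mo A, initialIdeal_eq_span mo B, Submodule.add_eq_sup,
    ← Ideal.span_union, ← Set.image_union] at hmem
  rw [mem_ideal_span_monomial_image] at hmem
  obtain ⟨si, hsi, hle⟩ := hmem γ (by simp [support_monomial])
  rcases hsi with ⟨f, hf, h0, rfl⟩ | ⟨f, hf, h0, rfl⟩
  · exact ⟨f, Or.inl hf, h0, hle⟩
  · exact ⟨f, Or.inr hf, h0, hle⟩


/-- bound on support of `monomial ν c * f`. -/
lemma support_monomial_mul_le {ν : Fin n →₀ ℕ} {c : K} {f : MvPolynomial (Fin n) K}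
    {d : Fin n →₀ ℕ} (hd : d ∈ (monomial ν c * f).support) :
    mo.toSyn d ≤ mo.toSyn ν + mo.toSyn (lm mo f) := by
  have := support_mul (monomial ν c) f hd
  rw [Finset.mem_add] at this
  obtain ⟨a, ha, b, hb, rfl⟩ := this
  have ha' : ν = a := by
    by_cases hc : c = 0
    · simp [hc, support_monomial] at ha
    · simpa [support_monomial, hc] using ha
  subst ha'
  rw [map_add]
  exact add_le_add (le_refl _) (le_toSyn_lm mo hb)

lemma rewrite_lemma {A B : Ideal (MvPolynomial (Fin n) K)}
    (hn : initialIdeal mo (A + B) = initialIdeal mo A + initialIdeal mo B) :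
    ∀ g ∈ A + B, ∃ a b, g = a + b ∧ a ∈ A ∧ b ∈ B ∧
      mo.toSyn (lm mo a) ≤ mo.toSyn (lm mo g) ∧
      mo.toSyn (lm mo b) ≤ mo.toSyn (lm mo g) ∧
      (mo.toSyn (lm mo a) < mo.toSyn (lm mo g) ∨
        mo.toSyn (lm mo b) < mo.toSyn (lm mo g) ∨ a = 0 ∨ b = 0) := by
  suffices H : ∀ δ : mo.syn, ∀ g ∈ A + B, mo.toSyn (lm mo g) = δ →
      ∃ a b, g = a + b ∧ a ∈ A ∧ b ∈ B ∧
      mo.toSyn (lm mo a) ≤ mo.toSyn (lm mo g) ∧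
      mo.toSyn (lm mo b) ≤ mo.toSyn (lm mo g) ∧
      (mo.toSyn (lm mo a) < mo.toSyn (lm mo g) ∨
        mo.toSyn (lm mo b) < mo.toSyn (lm mo g) ∨ a = 0 ∨ b = 0) by
    intro g hg
    exact H _ g hg rfl
  intro δ
  induction δ using WellFoundedLT.induction with
  | _ δ IH =>
  intro g hg hδ
  rcases eq_or_ne g 0 with rfl | hg0
  · exact ⟨0, 0, by simp, zero_mem A, zero_mem B, le_refl _, le_refl _, Or.inr (Or.inr (Or.inl rfl))⟩
  -- get a divisor of the leading monomial
  have hmono : monomial (lm mo g) (1 : K) ∈ initialIdeal mo A + initialIdeal mo B := by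
    rw [← hn]; exact monomial_lm_mem mo hg hg0
  obtain ⟨f, hfAB, hf0, hfle⟩ := exists_divisor mo hmono
  set γ := lm mo g with hγ
  set ν := γ - lm mo f with hν
  have hadd : lm mo f + ν = γ := add_tsub_cancel_of_le hfle
  set c := g.coeff γ / f.coeff (lm mo f) with hc
  have hc0 : c ≠ 0 := div_ne_zero (coeff_lm_ne_zero mo hg0) (coeff_lm_ne_zero mo hf0)
  set t := monomial ν c * f with ht
  have htsupp : ∀ d ∈ t.support, mo.toSyn d ≤ mo.toSyn γ := by
    intro d hd
    have := support_monomial_mul_le mo hd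
    rwa [← map_add, add_comm, hadd] at this
  have htγ : t.coeff γ = g.coeff γ := by
    have h1 : coeff (ν + lm mo f) ((monomial ν) c * f) = c * coeff (lm mo f) f :=
      coeff_monomial_mul _ _ _ _
    rw [add_comm ν (lm mo f), hadd] at h1
    rw [ht, h1, hc, div_mul_cancel₀ _ (coeff_lm_ne_zero mo hf0)]
  have htlm : mo.toSyn (lm mo t) ≤ mo.toSyn γ := toSyn_lm_le_of_support mo htsupp
  set g' := g - t with hg'
  have hg'supp : ∀ d ∈ g'.support, mo.toSyn d < mo.toSyn γ := by
    intro d hd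
    rcases eq_or_ne d γ with he | hne
    · exfalso
      have : g'.coeff d = 0 := by rw [he, hg', coeff_sub, htγ, sub_self]
      exact mem_support_iff.mp hd this
    · have hdle : mo.toSyn d ≤ mo.toSyn γ := by
        have hsub : g'.support ⊆ g.support ∪ t.support := by
          rw [hg', sub_eq_add_neg]
          refine (support_add).trans ?_
          simp [support_neg]
        rcases Finset.mem_union.mp (hsub hd) with hmem | hmem
        · exact le_toSyn_lm mo hmem
        · exact htsupp d hmem
      exact lt_of_le_of_ne hdle (fun he' => hne (mo.toSyn.injective he'))
  have htA : ∀ (hA : f ∈ A), t ∈ A := fun hA => Ideal.mul_mem_left _ _ hA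
  have htB : ∀ (hB : f ∈ B), t ∈ B := fun hB => Ideal.mul_mem_left _ _ hB
  have hg'mem : g' ∈ A + B := by
    rcases hfAB with hA | hB
    · exact sub_mem hg (Submodule.mem_sup_left (htA hA))
    · exact sub_mem hg (Submodule.mem_sup_right (htB hB))
  rcases eq_or_ne g' 0 with hgz | hg'0
  · -- g = t
    have hgt : g = t := by rwa [hg', sub_eq_zero] at hgz
    have hz : mo.toSyn (lm mo (0 : MvPolynomial (Fin n) K)) ≤ mo.toSyn γ := by
      rw [toSyn_lm_zero, ← MonomialOrder.bot_eq_zero]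
      exact bot_le
    rcases hfAB with hA | hB
    · exact ⟨g, 0, by ring, hgt ▸ htA hA, zero_mem B, le_refl _, hz,
        Or.inr (Or.inr (Or.inr rfl))⟩
    · exact ⟨0, g, by ring, zero_mem A, hgt ▸ htB hB, hz, le_refl _,
        Or.inr (Or.inr (Or.inl rfl))⟩
  · have hg'lt : mo.toSyn (lm mo g') < mo.toSyn γ :=
      hg'supp _ (lm_mem_support mo hg'0)
    obtain ⟨a', b', hab, ha', hb', hlea, hleb, -⟩ :=
      IH _ (hδ ▸ hg'lt) g' hg'mem rfl
    have hlea' : mo.toSyn (lm mo a') < mo.toSyn γ := lt_of_le_of_lt hlea hg'lt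
    have hleb' : mo.toSyn (lm mo b') < mo.toSyn γ := lt_of_le_of_lt hleb hg'lt
    rcases hfAB with hA | hB
    · refine ⟨a' + t, b', ?_, add_mem ha' (htA hA), hb', ?_, le_of_lt hleb',
        Or.inr (Or.inl hleb')⟩
      · rw [hg', sub_eq_iff_eq_add] at hab
        rw [hab]; ring
      · exact le_trans (toSyn_lm_add_le mo a' t) (max_le (le_of_lt hlea') htlm)
    · refine ⟨a', b' + t, ?_, ha', add_mem hb' (htB hB), le_of_lt hlea', ?_,
        Or.inl hlea'⟩
      · rw [hg', sub_eq_iff_eq_add] at hab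
        rw [hab]; ring
      · exact le_trans (toSyn_lm_add_le mo b' t) (max_le (le_of_lt hleb') htlm)


section SumHelpers
variable {R : Type*} [CommRing R] {ι : Type*} [DecidableEq ι]

lemma le_sum_ideals {s : Finset ι} {M : ι → Ideal R} {i : ι} (hi : i ∈ s) :
    M i ≤ ∑ j ∈ s, M j := by
  classical
  induction s using Finset.induction_on with
  | empty => simp at hi
  | @insert j s hj IH =>
    rw [Finset.sum_insert hj, Submodule.add_eq_sup]
    rcases Finset.mem_insert.mp hi with rfl | hi'
    · exact le_sup_left
    · exact le_trans (IH hi') le_sup_right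

lemma sum_ideals_le {s : Finset ι} {M : ι → Ideal R} {N : Ideal R}
    (h : ∀ i ∈ s, M i ≤ N) : ∑ j ∈ s, M j ≤ N := by
  classical
  induction s using Finset.induction_on with
  | empty => simp
  | @insert j s hj IH =>
    rw [Finset.sum_insert hj, Submodule.add_eq_sup]
    exact sup_le (h j (Finset.mem_insert_self j s))
      (IH fun i hi => h i (Finset.mem_insert_of_mem hi))

lemma mem_sum_ideals {s : Finset ι} {M : ι → Ideal R} {f : R}
    (hf : f ∈ ∑ i ∈ s, M i) : ∃ a : ι → R, (∀ i, a i ∈ M i) ∧ f = ∑ i ∈ s, a i := by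
  classical
  induction s using Finset.induction_on generalizing f with
  | empty =>
    refine ⟨0, fun i => zero_mem _, ?_⟩
    simpa using hf
  | @insert j s hj IH =>
    rw [Finset.sum_insert hj, Submodule.add_eq_sup] at hf
    obtain ⟨y, hy, z, hz, rfl⟩ := Submodule.mem_sup.mp hf
    obtain ⟨a, ha, rfl⟩ := IH hz
    refine ⟨Function.update a j y, ?_, ?_⟩
    · intro i
      rcases eq_or_ne i j with rfl | hne
      · rw [Function.update_self]; exact hy
      · rw [Function.update_of_ne hne]; exact ha i
    · rw [Finset.sum_insert hj, Function.update_self]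
      congr 1
      refine (Finset.sum_congr rfl fun i hi => ?_).symm
      have hne : i ≠ j := fun he => hj (he ▸ hi)
      exact Function.update_of_ne hne _ _

end SumHelpers

lemma key {m : ℕ} (E : Fin m → Ideal (MvPolynomial (Fin n) K))
    (h : ∀ i j, initialIdeal mo (E i + E j) = initialIdeal mo (E i) + initialIdeal mo (E j)) :
    ∀ (δ : mo.syn ×ₗ ℕ) (a : Fin m → MvPolynomial (Fin n) K),
      (∀ i, a i ∈ E i) →
      toLex (Finset.univ.sup fun i => mo.toSyn (lm mo (a i)),
        (Finset.univ.filter fun i =>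
          mo.toSyn (lm mo (a i)) = Finset.univ.sup fun i => mo.toSyn (lm mo (a i))).card) = δ →
      (∑ i, a i) ≠ 0 →
      monomial (lm mo (∑ i, a i)) (1 : K) ∈ ∑ i, initialIdeal mo (E i) := by
  intro δ
  induction δ using WellFoundedLT.induction with
  | _ δ IH =>
  intro a ha hmeas hf0
  set f := ∑ i, a i with hfdef
  set D := Finset.univ.sup fun i => mo.toSyn (lm mo (a i)) with hD
  by_cases hcase : ∃ i, a i ≠ 0 ∧ lm mo (a i) = lm mo f
  · obtain ⟨i, hi0, hilm⟩ := hcase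
    have : monomial (lm mo (a i)) (1 : K) ∈ initialIdeal mo (E i) :=
      monomial_lm_mem mo (ha i) hi0
    rw [hilm] at this
    exact le_sum_ideals (Finset.mem_univ i) this
  · push_neg at hcase
    -- there is k with coeff (lm f) (a k) ≠ 0, giving toSyn lm f < D
    have hflm : f.coeff (lm mo f) ≠ 0 := coeff_lm_ne_zero mo hf0
    have hcoeffsum : f.coeff (lm mo f) = ∑ i, (a i).coeff (lm mo f) := by
      rw [hfdef]; exact coeff_sum _ _ _
    have hk : ∃ k, (a k).coeff (lm mo f) ≠ 0 := by
      by_contra hc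
      push_neg at hc
      rw [hcoeffsum] at hflm
      exact hflm (Finset.sum_eq_zero fun i _ => hc i)
    obtain ⟨k, hk⟩ := hk
    have hk0 : a k ≠ 0 := fun he => hk (by rw [he]; simp)
    have hfltD : mo.toSyn (lm mo f) < D := by
      have h1 : mo.toSyn (lm mo f) ≤ mo.toSyn (lm mo (a k)) :=
        le_toSyn_lm mo (mem_support_iff.mpr hk)
      have h2 : mo.toSyn (lm mo f) ≠ mo.toSyn (lm mo (a k)) :=
        fun he => hcase k hk0 (mo.toSyn.injective he.symm)
      have h3 := Finset.le_sup (f := fun i => mo.toSyn (lm mo (a i))) (Finset.mem_univ k)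
      rw [← hD] at h3
      exact lt_of_lt_of_le (lt_of_le_of_ne h1 h2) h3
    -- pick i₀ attaining D
    have : Nonempty (Fin m) := ⟨k⟩
    obtain ⟨i₀, -, hi₀D⟩ := Finset.exists_mem_eq_sup Finset.univ Finset.univ_nonempty
      (fun i => mo.toSyn (lm mo (a i)))
    rw [← hD] at hi₀D
    have hDpos : (0 : mo.syn) < D := by
      refine lt_of_le_of_lt ?_ hfltD
      rw [← MonomialOrder.bot_eq_zero]; exact bot_le
    have hi₀0 : a i₀ ≠ 0 := by
      intro he
      rw [he, toSyn_lm_zero] at hi₀D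
      exact absurd (hi₀D ▸ hDpos) (lt_irrefl _)
    set γ := lm mo (a i₀) with hγ
    have hγD : mo.toSyn γ = D := hi₀D.symm
    have hcoeffγf : f.coeff γ = 0 := coeff_eq_zero_of_lm_lt mo (by rw [hγD]; exact hfltD)
    have hci₀ : (a i₀).coeff γ ≠ 0 := coeff_lm_ne_zero mo hi₀0
    -- find j ≠ i₀ with coeff γ (a j) ≠ 0
    have hj : ∃ j, j ≠ i₀ ∧ (a j).coeff γ ≠ 0 := by
      by_contra hc
      push_neg at hc
      have : f.coeff γ = (a i₀).coeff γ := by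
        rw [hfdef, coeff_sum]
        exact Finset.sum_eq_single i₀ (fun b _ hb => hc b hb) (by simp)
      rw [hcoeffγf] at this
      exact hci₀ this.symm
    obtain ⟨j, hji₀, hcj⟩ := hj
    have hj0 : a j ≠ 0 := fun he => hcj (by rw [he]; simp)
    have hjγ : lm mo (a j) = γ := by
      have h1 : mo.toSyn γ ≤ mo.toSyn (lm mo (a j)) :=
        le_toSyn_lm mo (mem_support_iff.mpr hcj)
      have h2 : mo.toSyn (lm mo (a j)) ≤ D := by
        have := Finset.le_sup (f := fun i => mo.toSyn (lm mo (a i))) (Finset.mem_univ j)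
        rwa [← hD] at this
      exact mo.toSyn.injective (le_antisymm (by rw [hγD]; exact h2) h1)
    -- apply the rewriting lemma to g = a i₀ + a j
    set g := a i₀ + a j with hgdef
    have hgmem : g ∈ E i₀ + E j := by
      rw [Submodule.add_eq_sup]
      exact Submodule.add_mem_sup (ha i₀) (ha j)
    obtain ⟨a', b', hab, ha', hb', hlea, hleb, hC⟩ := rewrite_lemma mo (h i₀ j) g hgmem
    have hgD : mo.toSyn (lm mo g) ≤ D := by
      refine le_trans (toSyn_lm_add_le mo _ _) (max_le ?_ ?_)
      · rw [← hγ, hγD]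
      · rw [hjγ, hγD]
    have hleaD : mo.toSyn (lm mo a') ≤ D := le_trans hlea hgD
    have hlebD : mo.toSyn (lm mo b') ≤ D := le_trans hleb hgD
    -- the new family
    set aN := Function.update (Function.update a i₀ a') j b' with haN
    have haNi₀ : aN i₀ = a' := by
      rw [haN, Function.update_of_ne (Ne.symm hji₀), Function.update_self]
    have haNj : aN j = b' := by rw [haN, Function.update_self]
    have haNo : ∀ i, i ≠ i₀ → i ≠ j → aN i = a i := by
      intro i h1 h2
      rw [haN, Function.update_of_ne h2, Function.update_of_ne h1]
    have haNmem : ∀ i, aN i ∈ E i := by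
      intro i
      rcases eq_or_ne i i₀ with rfl | h1
      · rw [haNi₀]; exact ha'
      rcases eq_or_ne i j with rfl | h2
      · rw [haNj]; exact hb'
      · rw [haNo i h1 h2]; exact ha i
    have hsumN : ∑ i, aN i = f := by
      have hi₀mem : i₀ ∈ (Finset.univ.erase j) := Finset.mem_erase.mpr ⟨Ne.symm hji₀, Finset.mem_univ i₀⟩
      have e1 : ∑ i, aN i = b' + ∑ i ∈ Finset.univ.erase j, Function.update a i₀ a' i := by
        rw [haN, ← Finset.add_sum_erase _ _ (Finset.mem_univ j), Function.update_self]
        congr 1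
        exact Finset.sum_congr rfl fun i hi =>
          Function.update_of_ne (Finset.mem_erase.mp hi).1 _ _
      have e2 : ∑ i ∈ Finset.univ.erase j, Function.update a i₀ a' i
          = a' + ∑ i ∈ (Finset.univ.erase j).erase i₀, a i := by
        rw [← Finset.add_sum_erase _ _ hi₀mem, Function.update_self]
        congr 1
        exact Finset.sum_congr rfl fun i hi =>
          Function.update_of_ne (Finset.mem_erase.mp hi).1 _ _
      have e3 : f = a j + (a i₀ + ∑ i ∈ (Finset.univ.erase j).erase i₀, a i) := by
        rw [hfdef, ← Finset.add_sum_erase _ _ (Finset.mem_univ j),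
          ← Finset.add_sum_erase _ _ hi₀mem]
      rw [e1, e2, e3]
      have hthis : a i₀ + a j = a' + b' := hab
      linear_combination -hthis
    -- measure decreases
    set DN := Finset.univ.sup fun i => mo.toSyn (lm mo (aN i)) with hDN
    have hDNle : DN ≤ D := by
      rw [hDN]
      refine Finset.sup_le fun i _ => ?_
      rcases eq_or_ne i i₀ with rfl | h1
      · rw [haNi₀]; exact hleaD
      rcases eq_or_ne i j with rfl | h2
      · rw [haNj]; exact hlebD
      · rw [haNo i h1 h2]
        have := Finset.le_sup (f := fun i => mo.toSyn (lm mo (a i))) (Finset.mem_univ i)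
        rwa [← hD] at this
    have hlt : toLex (DN, (Finset.univ.filter fun i => mo.toSyn (lm mo (aN i)) = DN).card) < δ := by
      rw [← hmeas, Prod.Lex.lt_iff]
      rcases lt_or_eq_of_le hDNle with hltD | heqD
      · exact Or.inl hltD
      · right
        refine ⟨heqD, ?_⟩
        -- the new filter is a strict subset of the old one
        simp only [ofLex_toLex]
        apply Finset.card_lt_card
        rw [Finset.ssubset_iff_of_subset]
        · -- find an element in old not in new
          have hzero : ∀ p : MvPolynomial (Fin n) K, p = 0 → mo.toSyn (lm mo p) ≠ D := by
            intro p hp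
            rw [hp, toSyn_lm_zero]
            exact fun he => absurd (he ▸ hDpos) (lt_irrefl _)
          have hi₀old : i₀ ∈ Finset.univ.filter fun i => mo.toSyn (lm mo (a i)) = D :=
            Finset.mem_filter.mpr ⟨Finset.mem_univ _, hi₀D.symm⟩
          have hjold : j ∈ Finset.univ.filter fun i => mo.toSyn (lm mo (a i)) = D :=
            Finset.mem_filter.mpr ⟨Finset.mem_univ _, by rw [hjγ, hγD]⟩
          rcases hC with hlta | hltb | ha0 | hb0
          · refine ⟨i₀, hi₀old, ?_⟩
            rw [Finset.mem_filter, haNi₀, heqD]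
            rintro ⟨-, he⟩
            exact absurd (he ▸ lt_of_lt_of_le hlta hgD) (lt_irrefl _)
          · refine ⟨j, hjold, ?_⟩
            rw [Finset.mem_filter, haNj, heqD]
            rintro ⟨-, he⟩
            exact absurd (he ▸ lt_of_lt_of_le hltb hgD) (lt_irrefl _)
          · refine ⟨i₀, hi₀old, ?_⟩
            rw [Finset.mem_filter, haNi₀, heqD]
            rintro ⟨-, he⟩
            exact hzero a' ha0 he
          · refine ⟨j, hjold, ?_⟩
            rw [Finset.mem_filter, haNj, heqD]
            rintro ⟨-, he⟩
            exact hzero b' hb0 he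
        · -- new filter ⊆ old filter
          intro i hi
          rw [Finset.mem_filter] at hi
          obtain ⟨-, hiD⟩ := hi
          rw [heqD] at hiD
          refine Finset.mem_filter.mpr ⟨Finset.mem_univ _, ?_⟩
          rcases eq_or_ne i i₀ with rfl | h1
          · exact hi₀D.symm
          rcases eq_or_ne i j with rfl | h2
          · rw [hjγ, hγD]
          · rw [← haNo i h1 h2]; exact hiD
    have := IH _ hlt aN haNmem rfl (by rw [hsumN]; exact hf0)
    rwa [hsumN] at this


end Aux

/-- If `(E i, E j)` is a Gröbner-nice pair for all `i, j`, then for any subset `X`,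
`(∑_{i∈X} E i, ∑_{j∉X} E j)` is a Gröbner-nice pair. -/
theorem stmt13 (mo : MonomialOrder (Fin n)) (m : ℕ)
    (E : Fin m → Ideal (MvPolynomial (Fin n) K))
    (h : ∀ i j, initialIdeal mo (E i + E j) = initialIdeal mo (E i) + initialIdeal mo (E j))
    (X : Finset (Fin m)) :
    initialIdeal mo ((∑ i ∈ X, E i) + ∑ j ∈ Xᶜ, E j) =
      initialIdeal mo (∑ i ∈ X, E i) + initialIdeal mo (∑ j ∈ Xᶜ, E j) := by
  classical
  have hEq : (∑ i ∈ X, E i) + ∑ j ∈ Xᶜ, E j = ∑ i, E i := Finset.sum_add_sum_compl X E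
  apply le_antisymm
  · rw [hEq]
    -- in(∑ E) ≤ in(E_X) + in(E_Xc)
    rw [initialIdeal]
    rw [Ideal.span_le]
    rintro p ⟨f, hf, h0, rfl⟩
    obtain ⟨a, ha, rfl⟩ := Aux.mem_sum_ideals hf
    have hkey := Aux.key mo E h _ a ha rfl h0
    have hsplit : (∑ i, initialIdeal mo (E i) : Ideal (MvPolynomial (Fin n) K)) =
        (∑ i ∈ X, initialIdeal mo (E i)) + ∑ i ∈ Xᶜ, initialIdeal mo (E i) :=
      (Finset.sum_add_sum_compl X _).symm
    rw [hsplit] at hkey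
    have hle : (∑ i ∈ X, initialIdeal mo (E i)) + ∑ i ∈ Xᶜ, initialIdeal mo (E i) ≤
        initialIdeal mo (∑ i ∈ X, E i) + initialIdeal mo (∑ j ∈ Xᶜ, E j) := by
      rw [Submodule.add_eq_sup, Submodule.add_eq_sup]
      apply sup_le_sup
      · exact Aux.sum_ideals_le fun i hi => Aux.initialIdeal_mono mo (Aux.le_sum_ideals hi)
      · exact Aux.sum_ideals_le fun i hi => Aux.initialIdeal_mono mo (Aux.le_sum_ideals hi)
    exact hle hkey
  · rw [Submodule.add_eq_sup]
    apply sup_le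
    · exact Aux.initialIdeal_mono mo (by rw [Submodule.add_eq_sup]; exact le_sup_left)
    · exact Aux.initialIdeal_mono mo (by rw [Submodule.add_eq_sup]; exact le_sup_right)
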